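/- arXiv:2507.09254 — 6 statements merged into one kernel-verified Lean document; each statement's English description precedes it below -/
import Mathlib

section
/- Let n ≥ 1 and let 1 ≤ m₁ < m₂ ≤ n be integers. For i = 1, 2 let bᵢ be the largest integer with bᵢ·mᵢ ≤ n and vᵢ = n − bᵢ·mᵢ. Then the partition (m₁^{b₁}, v₁) of n is strictly dominated by the partition (m₂^{b₂}, v₂) of n (parts equal to 0 being omitted). -/
/-- `p` is a partition of `n`: a weakly decreasing list of positive integers summing to `n`. -/
def IsPartitionOf (p : List ℕ) (n : ℕ) : Prop :=
  p.Pairwise (· ≥ ·) ∧ (∀ x ∈ p, 0 < x) ∧ p.sum = n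

/-- `Dominates q p` means `p ⊴ q` in the dominance order. -/
def Dominates (q p : List ℕ) : Prop :=
  ∀ k : ℕ, (p.take k).sum ≤ (q.take k).sum

lemma take_sum_aux (b m v k : ℕ) :
    ((List.replicate b m ++ (if v = 0 then [] else [v])).take k).sum
      = min k b * m + (if k ≤ b then 0 else v) := by
  rw [List.take_append, List.sum_append, List.take_replicate,
    List.sum_replicate, smul_eq_mul, List.length_replicate]
  congr 1
  rcases le_or_gt k b with h | h
  · rw [Nat.sub_eq_zero_of_le h, if_pos h]
    by_cases hv : v = 0 <;> simp [hv]
  · rw [if_neg (Nat.not_le.mpr h)]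
    by_cases hv : v = 0
    · simp [hv]
    · rw [if_neg hv, List.take_of_length_le (by simp; omega)]
      simp

/-- If `1 ≤ m₁ < m₂ ≤ n` then the partition `(m₁^{b₁}, v₁)` of `n` is strictly dominated by
the partition `(m₂^{b₂}, v₂)` of `n`, where `bᵢ` is maximal with `bᵢ*mᵢ ≤ n` and
`vᵢ = n - bᵢ*mᵢ` (parts equal to `0` omitted). -/
theorem stmt1 (n m₁ m₂ b₁ b₂ v₁ v₂ : ℕ) (hn : 1 ≤ n) (hm₁ : 1 ≤ m₁) (h12 : m₁ < m₂)
    (hm₂ : m₂ ≤ n)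
    (hb₁ : b₁ * m₁ ≤ n) (hb₁max : n < (b₁ + 1) * m₁) (hv₁ : v₁ = n - b₁ * m₁)
    (hb₂ : b₂ * m₂ ≤ n) (hb₂max : n < (b₂ + 1) * m₂) (hv₂ : v₂ = n - b₂ * m₂) :
    Dominates (List.replicate b₂ m₂ ++ if v₂ = 0 then [] else [v₂])
        (List.replicate b₁ m₁ ++ if v₁ = 0 then [] else [v₁]) ∧
      (List.replicate b₁ m₁ ++ if v₁ = 0 then [] else [v₁]) ≠
        (List.replicate b₂ m₂ ++ if v₂ = 0 then [] else [v₂]) := by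
  have hb1pos : 1 ≤ b₁ := by
    by_contra h
    interval_cases b₁
    simp at hb₁max
    omega
  have hb2pos : 1 ≤ b₂ := by
    by_contra h
    interval_cases b₂
    simp at hb₂max
    omega
  have hle : b₂ ≤ b₁ := by
    have : b₂ * m₂ < (b₁ + 1) * m₂ :=
      lt_of_le_of_lt hb₂ (lt_of_lt_of_le hb₁max (Nat.mul_le_mul_left _ h12.le))
    exact Nat.lt_succ_iff.mp (Nat.lt_of_mul_lt_mul_right this)
  constructor
  · intro k
    rw [take_sum_aux, take_sum_aux]
    rcases le_or_gt k b₂ with h | h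
    · have hk1 : k ≤ b₁ := h.trans hle
      simp [h, hk1, Nat.min_eq_left h, Nat.min_eq_left hk1]
      exact Nat.mul_le_mul_left _ h12.le
    · have hq : min k b₂ * m₂ + (if k ≤ b₂ then 0 else v₂) = n := by
        rw [Nat.min_eq_right h.le, if_neg (Nat.not_le.mpr h)]
        omega
      rw [hq]
      rcases le_or_gt k b₁ with h1 | h1
      · rw [Nat.min_eq_left h1, if_pos h1]
        have : k * m₁ ≤ b₁ * m₁ := Nat.mul_le_mul_right _ h1
        omega
      · rw [Nat.min_eq_right h1.le, if_neg (Nat.not_le.mpr h1)]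
        omega
  · intro hEq
    have : ((List.replicate b₁ m₁ ++ if v₁ = 0 then [] else [v₁]) : List ℕ).head? =
        ((List.replicate b₂ m₂ ++ if v₂ = 0 then [] else [v₂]) : List ℕ).head? :=
      congrArg _ hEq
    obtain ⟨c₁, rfl⟩ : ∃ c, b₁ = c + 1 := ⟨b₁ - 1, by omega⟩
    obtain ⟨c₂, rfl⟩ : ∃ c, b₂ = c + 1 := ⟨b₂ - 1, by omega⟩
    simp [List.replicate_succ] at this
    omega
end

section
/- Let n ≥ 1 and let m be an integer with 1 ≤ m ≤ 2n. There exists a symplectic partition of 2n whose largest part equals m if and only if m ≤ n or m is even. -/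
/-- A partition is symplectic if every odd part occurs an even number of times. -/
def Symplectic (p : List ℕ) : Prop :=
  ∀ x : ℕ, Odd x → Even (p.count x)

lemma sorted_rep (k a : ℕ) : List.Pairwise (· ≥ ·) (List.replicate k a) := by
  induction k with
  | zero => simp
  | succ k ih =>
    rw [List.replicate_succ]
    exact List.pairwise_cons.2 ⟨fun b hb => le_of_eq (List.eq_of_mem_replicate hb), ih⟩

/-- For `1 ≤ m ≤ 2n`, there exists a symplectic partition of `2n` with largest part `m`
iff `m ≤ n` or `m` is even. -/
theorem stmt3 (n m : ℕ) (hn : 1 ≤ n) (hm : 1 ≤ m) (hm2 : m ≤ 2 * n) :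
    (∃ p : List ℕ, IsPartitionOf p (2 * n) ∧ Symplectic p ∧ p.getD 0 0 = m) ↔
      (m ≤ n ∨ Even m) := by
  constructor
  · rintro ⟨p, ⟨hsort, hpos, hsum⟩, hsymp, hhead⟩
    by_contra h
    push_neg at h
    obtain ⟨h1, h2⟩ := h
    rw [Nat.not_even_iff_odd] at h2
    cases p with
    | nil => simp at hhead; omega
    | cons a t =>
      simp only [List.getD_cons_zero] at hhead
      subst hhead
      have hcount : Even ((a :: t).count a) := hsymp a h2
      have h1c : 1 ≤ (a :: t).count a := by simp [List.count_cons_self]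
      have h2c : 2 ≤ (a :: t).count a := by
        rcases hcount with ⟨k, hk⟩; omega
      have hmem : a ∈ t := by
        by_contra hna
        rw [List.count_cons_self, List.count_eq_zero_of_not_mem hna] at h2c
        omega
      have hts : a ≤ t.sum := List.le_sum_of_mem hmem
      have : 2 * a ≤ (a :: t).sum := by simp; omega
      omega
  · intro h
    rcases Nat.even_or_odd m with he | ho
    · -- m even: use m :: replicate ((2n - m)/2) 2
      obtain ⟨k, hk⟩ := he
      have hkn : k ≤ n := by omega
      refine ⟨m :: List.replicate (n - k) 2, ⟨?_, ?_, ?_⟩, ?_, ?_⟩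
      · refine List.pairwise_cons.2 ⟨?_, sorted_rep _ _⟩
        intro b hb
        rw [List.eq_of_mem_replicate hb]; omega
      · intro x hx
        rcases List.mem_cons.1 hx with rfl | hx
        · omega
        · rw [List.eq_of_mem_replicate hx]; omega
      · rw [List.sum_cons, List.sum_replicate, smul_eq_mul]; omega
      · intro x hx
        have hx2 : x ≠ 2 := by rintro rfl; exact (Nat.not_odd_iff_even.2 (by decide)) hx
        have hxm : x ≠ m := by rintro rfl; rcases hx with ⟨j, hj⟩; omega
        simp [List.count_cons_of_ne (Ne.symm hxm), List.count_replicate,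
          show (2 == x) = false by simp; omega]
      · simp
    · -- m odd, so m ≤ n
      have hmn : m ≤ n := by
        rcases h with h | h
        · exact h
        · exact absurd h (Nat.not_even_iff_odd.2 ho)
      rcases eq_or_lt_of_le hm with h1 | h1
      · -- m = 1 : all ones
        refine ⟨List.replicate (2 * n) 1, ⟨sorted_rep _ _, ?_, ?_⟩, ?_, ?_⟩
        · intro x hx; rw [List.eq_of_mem_replicate hx]; omega
        · simp [List.sum_replicate]
        · intro x hx
          by_cases hx1 : x = 1
          · subst hx1
            rw [List.count_replicate, if_pos (by rfl)]
            exact ⟨n, by ring⟩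
          · simp [List.count_replicate, show (1 == x) = false by simp; omega]
        · rw [← h1]
          have h0 : 0 < 2 * n := by omega
          cases hh : 2 * n with
          | zero => omega
          | succ k => simp [List.replicate_succ]
      · -- m ≥ 2 odd hence ≥ 3: [m, m, 2,2,...,2]
        refine ⟨m :: m :: List.replicate (n - m) 2, ⟨?_, ?_, ?_⟩, ?_, ?_⟩
        · refine List.pairwise_cons.2 ⟨?_, List.pairwise_cons.2 ⟨?_, sorted_rep _ _⟩⟩
          · intro b hb
            rcases List.mem_cons.1 hb with rfl | hb
            · exact le_refl _
            · rw [List.eq_of_mem_replicate hb]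
              rcases ho with ⟨j, hj⟩; omega
          · intro b hb
            rw [List.eq_of_mem_replicate hb]
            rcases ho with ⟨j, hj⟩; omega
        · intro x hx
          rcases List.mem_cons.1 hx with rfl | hx
          · omega
          rcases List.mem_cons.1 hx with rfl | hx
          · omega
          · rw [List.eq_of_mem_replicate hx]; omega
        · rw [List.sum_cons, List.sum_cons, List.sum_replicate, smul_eq_mul]; omega
        · intro x hx
          have hx2 : x ≠ 2 := by rintro rfl; exact (Nat.not_odd_iff_even.2 (by decide)) hx
          by_cases hxm : x = m
          · subst hxm
            rw [List.count_cons_self, List.count_cons_self, List.count_replicate,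
              if_neg (by simp; omega)]
            exact ⟨1, rfl⟩
          · simp [List.count_cons_of_ne (Ne.symm hxm), List.count_replicate,
              show (2 == x) = false by simp; omega]
        · simp
end

section
/- Let n ≥ 2 and let m be an odd integer with n + 1 ≤ m ≤ 2n − 2. Then there is no orthogonal partition q of 2n such that either (the largest part of q equals m and occurs at least twice) or (the largest part of q equals m + 1 and is strictly larger than the second-largest part). Equivalently, no orthogonal partition q of 2n satisfies cl(q) = m, where cl(q) = q₁ if q₁ = q₂ and q₁ − 1 if q₁ > q₂. -/
/-- A partition is orthogonal if every even part occurs an even number of times. -/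
def Orthogonal (p : List ℕ) : Prop :=
  ∀ x : ℕ, Even x → Even (p.count x)

/-- `clP p = p₁` if the two largest parts agree, and `p₁ - 1` otherwise. -/
def clP (p : List ℕ) : ℕ :=
  if p.getD 0 0 = p.getD 1 0 then p.getD 0 0 else p.getD 0 0 - 1

lemma count_mul_le_sum (x : ℕ) : ∀ l : List ℕ, l.count x * x ≤ l.sum := by
  intro l
  induction l with
  | nil => simp
  | cons a t ih =>
    simp only [List.count_cons, List.sum_cons]
    split_ifs with h
    · have hax := eq_of_beq h
      subst hax; nlinarith
    · simpa using le_trans ih (Nat.le_add_left _ _)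

/-- For `n ≥ 2` and `m` odd with `n + 1 ≤ m ≤ 2n - 2`, there is no orthogonal partition `q`
of `2n` whose largest part is `m` and repeated, or whose largest part is `m + 1` and not
repeated; equivalently, no orthogonal partition `q` of `2n` has `clP q = m`. -/
theorem stmt4 (n m : ℕ) (hn : 2 ≤ n) (hodd : Odd m) (h1 : n + 1 ≤ m) (h2 : m ≤ 2 * n - 2) :
    (¬ ∃ q : List ℕ, IsPartitionOf q (2 * n) ∧ Orthogonal q ∧
        ((q.getD 0 0 = m ∧ 2 ≤ q.count m) ∨ (q.getD 0 0 = m + 1 ∧ q.getD 1 0 < m + 1))) ∧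
    (¬ ∃ q : List ℕ, IsPartitionOf q (2 * n) ∧ Orthogonal q ∧ clP q = m) := by
  have key : ¬ ∃ q : List ℕ, IsPartitionOf q (2 * n) ∧ Orthogonal q ∧
      ((q.getD 0 0 = m ∧ 2 ≤ q.count m) ∨ (q.getD 0 0 = m + 1 ∧ q.getD 1 0 < m + 1)) := by
    rintro ⟨q, ⟨hsort, hpos, hsum⟩, horth, hcase⟩
    rcases hcase with ⟨ha, hc⟩ | ⟨ha, hlt⟩
    · -- largest part m repeated: sum ≥ 2m > 2n
      have h := count_mul_le_sum m q
      have h2m : 2 * m ≤ q.sum := le_trans (by nlinarith) h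
      omega
    · -- largest part m+1 (even), occurs exactly once
      have heven : Even (m + 1) := by
        rcases hodd with ⟨k, hk⟩; exact ⟨k + 1, by omega⟩
      match q with
      | [] => simp at ha
      | a :: t =>
        have ha' : a = m + 1 := by simpa using ha
        have hnot : (m + 1) ∉ t := by
          match t with
          | [] => simp
          | b :: t' =>
            have hb : b < m + 1 := by simpa using hlt
            have hs : ∀ c ∈ t', b ≥ c := (List.pairwise_cons.mp
              (List.pairwise_cons.mp hsort).2).1
            intro hmem
            rcases List.mem_cons.mp hmem with h | h
            · omega
            · have := hs _ h; omega
        have hcount : (a :: t).count (m + 1) = 1 := by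
          rw [List.count_cons, List.count_eq_zero_of_not_mem hnot]
          simp [ha']
        have := horth (m + 1) heven
        rw [hcount] at this
        exact (Nat.not_even_one) this
  refine ⟨key, ?_⟩
  rintro ⟨q, hpart, horth, hcl⟩
  apply key
  refine ⟨q, hpart, horth, ?_⟩
  unfold clP at hcl
  split_ifs at hcl with h
  · left
    refine ⟨hcl, ?_⟩
    match q with
    | [] => simp at hcl; omega
    | [a] =>
      simp at h hcl
      obtain ⟨_, hpos', _⟩ := hpart
      have := hpos' a (by simp)
      omega
    | a :: b :: t =>
      simp at h hcl
      have hb : b = m := by omega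
      rw [List.count_cons, List.count_cons]
      simp only [hb, hcl, beq_self_eq_true, if_true]
      omega
  · right
    have ha : q.getD 0 0 = m + 1 := by
      have hm1 : 1 ≤ m := by omega
      rcases Nat.eq_zero_or_pos (q.getD 0 0) with h0 | h0
      · rw [h0] at hcl; simp at hcl; omega
      · omega
    refine ⟨ha, ?_⟩
    match q with
    | [] => simp at ha
    | [a] => simp
    | a :: b :: t =>
      simp at ha h ⊢
      have hba : b ≤ a := (List.pairwise_cons.mp hpart.1).1 b (by simp)
      omega
end

section
/- Let n ≥ 1 and let m be an even integer with 1 ≤ m ≤ 2n. Let b be the largest integer with b·m ≤ 2n and v = 2n − b·m. Then (m^b, v) (omitting v if v = 0) is a symplectic partition of 2n, and every symplectic partition of 2n all of whose parts are at most m is dominated by (m^b, v) in the dominance order. -/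
lemma sum_take_le_mul {q : List ℕ} {m : ℕ} (h : ∀ x ∈ q, x ≤ m) (k : ℕ) :
    (q.take k).sum ≤ k * m := by
  calc (q.take k).sum ≤ (q.take k).length * m := by
        apply List.sum_le_card_nsmul
        intro x hx; exact h x (List.mem_of_mem_take hx)
    _ ≤ k * m := Nat.mul_le_mul_right m (List.length_take_le k q)

lemma sum_take_le_sum (q : List ℕ) (k : ℕ) : (q.take k).sum ≤ q.sum := by
  conv_rhs => rw [← List.take_append_drop k q]
  rw [List.sum_append]; exact Nat.le_add_right _ _

/-- For even `m` with `1 ≤ m ≤ 2n`, `b` maximal with `b*m ≤ 2n` and `v = 2n - b*m`,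
the list `(m^b, v)` (omitting `v` if `v = 0`) is a symplectic partition of `2n` dominating
every symplectic partition of `2n` all of whose parts are at most `m`. -/
theorem stmt5 (n m b v : ℕ) (hn : 1 ≤ n) (hme : Even m) (hm1 : 1 ≤ m) (hm2 : m ≤ 2 * n)
    (hb : b * m ≤ 2 * n) (hbmax : 2 * n < (b + 1) * m) (hv : v = 2 * n - b * m) :
    IsPartitionOf (List.replicate b m ++ if v = 0 then [] else [v]) (2 * n) ∧
    Symplectic (List.replicate b m ++ if v = 0 then [] else [v]) ∧
    ∀ q : List ℕ, IsPartitionOf q (2 * n) → Symplectic q → (∀ x ∈ q, x ≤ m) →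
      Dominates (List.replicate b m ++ if v = 0 then [] else [v]) q := by
  have hbm : (b + 1) * m = b * m + m := by ring
  have hvm : v < m := by omega
  have hve : Even v := by
    have h1 : Even (b * m) := hme.mul_left b
    obtain ⟨c, hc⟩ := h1
    rw [Nat.even_iff]; omega
  set L := List.replicate b m ++ if v = 0 then [] else [v] with hL
  have hsum : L.sum = 2 * n := by
    by_cases h0 : v = 0
    · simp [hL, h0]; omega
    · simp [hL, h0]; omega
  refine ⟨⟨?_, ?_, hsum⟩, ?_, ?_⟩
  · -- sorted
    rw [hL, List.pairwise_append]
    refine ⟨List.pairwise_replicate.2 (Or.inr le_rfl), ?_, ?_⟩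
    · by_cases h0 : v = 0 <;> simp [h0]
    · intro a ha x hx
      by_cases h0 : v = 0 <;> simp [h0] at hx ha ⊢
      omega
  · -- positive
    intro x hx
    rw [hL] at hx
    rcases List.mem_append.1 hx with h | h
    · have := List.eq_of_mem_replicate h; omega
    · by_cases h0 : v = 0 <;> simp [h0] at h; omega
  · -- symplectic
    intro x hx
    have hxm : x ≠ m := by rintro rfl; exact (Nat.not_even_iff_odd.2 hx) hme
    have hxv : x ≠ v := by rintro rfl; exact (Nat.not_even_iff_odd.2 hx) hve
    rw [hL]
    by_cases h0 : v = 0 <;> simp [h0, List.count_append, List.count_replicate, hxm, hxv, Ne.symm hxm, Ne.symm hxv]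
  · -- dominance
    intro q hq _ hqm k
    have hq2 : (q.take k).sum ≤ 2 * n := hq.2.2 ▸ sum_take_le_sum q k
    by_cases hk : k ≤ b
    · have : (L.take k).sum = k * m := by
        rw [hL, List.take_append_of_le_length (by simpa using hk), List.take_replicate]
        simp [Nat.min_eq_left hk, Nat.mul_comm]
      rw [this]
      exact sum_take_le_mul hqm k
    · have hlen : L.length ≤ k := by
        rw [hL]
        by_cases h0 : v = 0 <;> simp [h0] <;> omega
      rw [List.take_of_length_le hlen, hsum]
      exact hq2
end

section
/- Let n ≥ 1 and let m be an odd integer with 1 ≤ m ≤ n. Let k be the largest integer with 2k·m ≤ 2n, and suppose 2n + 1 − m ≤ 2k·m < 2n; set v = 2n − 2k·m. Then (m^{2k}, v) is a symplectic partition of 2n, and every symplectic partition of 2n all of whose parts are at most m is dominated by (m^{2k}, v) in the dominance order. -/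
/-- For odd `m` with `1 ≤ m ≤ n`, `k` maximal with `2*k*m ≤ 2n`, assuming
`2n + 1 - m ≤ 2km < 2n` and `v = 2n - 2km`, the list `(m^{2k}, v)` is a symplectic partition
of `2n` dominating every symplectic partition of `2n` all of whose parts are at most `m`. -/
theorem stmt6 (n m k v : ℕ) (hn : 1 ≤ n) (hodd : Odd m) (hm1 : 1 ≤ m) (hmn : m ≤ n)
    (hk : 2 * k * m ≤ 2 * n) (hkmax : 2 * n < 2 * (k + 1) * m)
    (hlo : 2 * n + 1 - m ≤ 2 * k * m) (hhi : 2 * k * m < 2 * n)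
    (hv : v = 2 * n - 2 * k * m) :
    IsPartitionOf (List.replicate (2 * k) m ++ [v]) (2 * n) ∧
    Symplectic (List.replicate (2 * k) m ++ [v]) ∧
    ∀ q : List ℕ, IsPartitionOf q (2 * n) → Symplectic q → (∀ x ∈ q, x ≤ m) →
      Dominates (List.replicate (2 * k) m ++ [v]) q := by
  have hvle : v ≤ m := by omega
  have hvpos : 0 < v := by omega
  have e1 : 2 * k * m = 2 * (k * m) := by ring
  have hveven : Even v := ⟨n - k * m, by omega⟩
  have hsum : (List.replicate (2 * k) m ++ [v]).sum = 2 * n := by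
    simp [List.sum_replicate, smul_eq_mul]
    omega
  refine ⟨⟨?_, ?_, hsum⟩, ?_, ?_⟩
  · refine List.pairwise_append.mpr ⟨List.pairwise_replicate.mpr (by simp), by simp, ?_⟩
    intro a ha b hb
    rw [List.eq_of_mem_replicate ha, List.mem_singleton.mp hb]
    exact hvle
  · intro x hx
    rcases List.mem_append.mp hx with h | h
    · rw [List.eq_of_mem_replicate h]; exact hm1
    · rw [List.mem_singleton.mp h]; exact hvpos
  · intro x hx
    have hxv : x ≠ v := by
      rintro rfl
      exact (Nat.not_odd_iff_even.mpr hveven) hx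
    rw [List.count_append, List.count_replicate,
      List.count_eq_zero_of_not_mem (by simp [hxv])]
    by_cases hxm : m = x
    · rw [if_pos (by simp [hxm])]; exact ⟨k, by ring⟩
    · rw [if_neg (by simp [hxm])]; simp
  · intro q hq _ hle j
    have hlen : (q.take j).sum ≤ j * m := by
      calc (q.take j).sum ≤ (q.take j).length * m := by
            have := List.sum_le_card_nsmul (q.take j) m
              (fun x hx => hle x (List.mem_of_mem_take hx))
            simpa [smul_eq_mul] using this
        _ ≤ j * m := Nat.mul_le_mul_right m (by simpa using List.length_take_le j q)
    by_cases hj : j ≤ 2 * k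
    · have : (List.replicate (2 * k) m ++ [v]).take j = List.replicate j m := by
        rw [List.take_append_of_le_length (by simpa using hj)]
        exact (List.take_replicate (a := m) (i := j) (n := 2 * k)) ▸ by simp [min_eq_left hj]
      rw [this]
      simpa [List.sum_replicate, smul_eq_mul, mul_comm] using hlen
    · have hlen2 : (List.replicate (2 * k) m ++ [v]).length ≤ j := by
        simp; omega
      rw [List.take_of_length_le hlen2, hsum]
      calc (q.take j).sum ≤ q.sum := List.Sublist.sum_le_sum (List.take_sublist j q)
            (fun x _ => Nat.zero_le x)
        _ = 2 * n := hq.2.2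
end

section
/- Let n ≥ 2 and let m be an odd integer with 1 ≤ m ≤ n. Let b be the largest integer with b·m ≤ 2n, suppose b is even and b·m < 2n, and set v = 2n − b·m − 1. Then (m^b, v, 1) is an orthogonal partition of 2n, and every orthogonal partition q of 2n with cl(q) ≤ m (where cl(q) = q₁ if q₁ = q₂ and q₁ − 1 otherwise) is dominated by (m^b, v, 1) in the dominance order. -/
lemma even_length_of_even_counts (l : List ℕ) (h : ∀ x ∈ l, Even (l.count x)) :
    Even l.length := by
  have key := Multiset.toFinset_sum_count_eq (↑l : Multiset ℕ)
  rw [Multiset.coe_card] at key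
  rw [← key]
  apply Finset.even_sum
  intro x hx
  rw [Multiset.mem_toFinset, Multiset.mem_coe] at hx
  rw [Multiset.coe_count]
  exact h x hx

/-- sum + #even parts ≡ length (mod 2) -/
lemma sum_parity (q : List ℕ) :
    (q.sum + q.countP (fun x => x % 2 = 0)) % 2 = q.length % 2 := by
  induction q with
  | nil => rfl
  | cons a l ih =>
    by_cases h : a % 2 = 0 <;>
      simp [List.countP_cons, List.sum_cons, h] <;> omega

lemma even_countP_even (q : List ℕ) (h : Orthogonal q) :
    Even (q.countP (fun x => x % 2 = 0)) := by
  rw [List.countP_eq_length_filter]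
  apply even_length_of_even_counts
  intro x hx
  have hx' := hx
  rw [List.mem_filter] at hx'
  obtain ⟨hxq, hxe⟩ := hx'
  rw [List.count_filter (p := fun x => decide (x % 2 = 0)) hxe]
  apply h
  simp only [decide_eq_true_eq] at hxe
  exact Nat.even_iff.mpr hxe

/-- Every part of an orthogonal partition `q` of `2n` with `clP q ≤ m` (m odd, m ≤ n, 2 ≤ n)
is at most `m`. -/
lemma parts_le (n m : ℕ) (hn : 2 ≤ n) (hodd : Odd m) (hmn : m ≤ n)
    (q : List ℕ) (hq : IsPartitionOf q (2 * n)) (ho : Orthogonal q) (hcl : clP q ≤ m) :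
    ∀ x ∈ q, x ≤ m := by
  obtain ⟨hs, hpos, hsum⟩ := hq
  match q with
  | [] => simp at hsum; omega
  | [a] =>
    simp at hsum
    have : clP [a] = a - 1 := by
      simp [clP]
      omega
    intro x hx
    simp at hx
    omega
  | a :: c :: r =>
    -- first show a ≤ m
    have hac : c ≤ a := (List.rel_of_pairwise_cons hs (by simp))
    have ham : a ≤ m := by
      by_cases hc : a = c
      · have : clP (a :: c :: r) = a := by simp [clP, hc]
        omega
      · have hcl' : clP (a :: c :: r) = a - 1 := by simp [clP, hc]
        have ha1 : a ≤ m + 1 := by omega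
        by_contra ham
        have haeq : a = m + 1 := by omega
        -- a is even, but occurs exactly once
        have hae : Even a := by
          obtain ⟨t2, ht2⟩ := hodd
          exact Nat.even_iff.mpr (by omega)
        have hcnt : (a :: c :: r).count a = 1 := by
          rw [List.count_cons_self]
          have : (c :: r).count a = 0 := by
            rw [List.count_eq_zero]
            intro hmem
            rcases List.mem_cons.mp hmem with h | h
            · exact hc h
            · have := List.rel_of_pairwise_cons (List.pairwise_cons.mp hs).2 h
              omega
          omega
        have := ho a hae
        rw [hcnt] at this
        simp [Nat.even_iff] at this
    intro x hx
    rcases List.mem_cons.mp hx with rfl | hx'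
    · exact ham
    · exact le_trans (List.rel_of_pairwise_cons hs hx') ham

/-- For `n ≥ 2`, `m` odd with `1 ≤ m ≤ n`, `b` maximal with `b*m ≤ 2n`, `b` even with
`b*m < 2n`, and `v = 2n - b*m - 1`, the list `(m^b, v, 1)` is an orthogonal partition of
`2n` dominating every orthogonal partition `q` of `2n` with `clP q ≤ m`. -/
theorem stmt7 (n m b v : ℕ) (hn : 2 ≤ n) (hodd : Odd m) (hm1 : 1 ≤ m) (hmn : m ≤ n)
    (hb : b * m ≤ 2 * n) (hbmax : 2 * n < (b + 1) * m) (hbe : Even b)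
    (hlt : b * m < 2 * n) (hv : v = 2 * n - b * m - 1) :
    IsPartitionOf (List.replicate b m ++ [v, 1]) (2 * n) ∧
    Orthogonal (List.replicate b m ++ [v, 1]) ∧
    ∀ q : List ℕ, IsPartitionOf q (2 * n) → Orthogonal q → clP q ≤ m →
      Dominates (List.replicate b m ++ [v, 1]) q := by
  obtain ⟨c, hc⟩ := hbe
  obtain ⟨t, ht⟩ := hodd
  have hbm_even : Even (b * m) := ⟨c * m, by rw [hc]; ring⟩
  obtain ⟨s, hs⟩ := hbm_even
  -- basic facts about v
  have hv2 : v + 1 + b * m = 2 * n := by omega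
  have hvm : v < m := by nlinarith
  have hv1 : 1 ≤ v := by omega
  have hvodd : v % 2 = 1 := by omega
  have hmodd : m % 2 = 1 := by omega
  set p := List.replicate b m ++ [v, 1] with hp
  have hpsum : p.sum = 2 * n := by
    simp [hp, List.sum_replicate, smul_eq_mul]
    omega
  have hpart : IsPartitionOf p (2 * n) := by
    refine ⟨?_, ?_, hpsum⟩
    · rw [hp, List.pairwise_append]
      refine ⟨?_, ?_, ?_⟩
      · rw [List.pairwise_replicate]
        right; exact le_refl m
      · simp [List.pairwise_cons]; omega
      · intro x hx y hy
        rw [List.eq_of_mem_replicate hx]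
        simp at hy
        rcases hy with rfl | rfl <;> omega
    · intro x hx
      rw [hp] at hx
      rcases List.mem_append.mp hx with h | h
      · rw [List.eq_of_mem_replicate h]; omega
      · simp at h; rcases h with rfl | rfl <;> omega
  have horth : Orthogonal p := by
    intro x hx
    have : p.count x = 0 := by
      rw [List.count_eq_zero]
      intro hmem
      obtain ⟨y, rfl⟩ := hx
      rcases List.mem_append.mp hmem with h | h
      · have := List.eq_of_mem_replicate h; omega
      · simp at h; rcases h with h | h <;> omega
    rw [this]; exact Even.zero
  refine ⟨hpart, horth, ?_⟩
  intro q hq ho hcl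
  have hle := parts_le n m hn ⟨t, ht⟩ hmn q hq ho hcl
  obtain ⟨hqs, hqpos, hqsum⟩ := hq
  have hplen : p.length = b + 2 := by simp [hp]
  intro k
  have htake_le : (q.take k).sum ≤ q.sum := by
    conv_rhs => rw [← List.take_append_drop k q]
    rw [List.sum_append]
    exact Nat.le_add_right _ _
  have htake_km : (q.take k).sum ≤ k * m := by
    calc (q.take k).sum ≤ (q.take k).length • m :=
          List.sum_le_card_nsmul _ _ (fun x hx => hle x (List.mem_of_mem_take hx))
      _ ≤ k * m := by
          rw [smul_eq_mul]
          exact Nat.mul_le_mul_right m (by simp)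
  rcases lt_or_ge k (b + 1) with hk | hk
  · -- k ≤ b
    have hkb : k ≤ b := by omega
    have hpk : (p.take k).sum = k * m := by
      rw [hp, List.take_append_of_le_length (by simp; omega), List.take_replicate,
        min_eq_left hkb, List.sum_replicate, smul_eq_mul]
    rw [hpk]
    exact htake_km
  rcases eq_or_lt_of_le hk with hk1 | hk2
  · -- k = b + 1
    have hpk : (p.take k).sum = 2 * n - 1 := by
      rw [hp, ← hk1]
      have : (List.replicate b m ++ [v, 1]).take (b + 1)
          = List.replicate b m ++ [v] := by
        rw [show b + 1 = (List.replicate b m).length + 1 by simp,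
          List.take_append]
        simp
      rw [this, List.sum_append, List.sum_replicate, smul_eq_mul]
      simp
      omega
    rw [hpk]
    -- claim: (q.take k).sum ≠ 2 * n
    by_contra hcon
    push_neg at hcon
    have hqk : (q.take k).sum = 2 * n := by omega
    -- then drop is empty
    have hdrop : (q.drop k).sum = 0 := by
      have := List.take_append_drop k q
      have hsum2 : (q.take k).sum + (q.drop k).sum = 2 * n := by
        rw [← List.sum_append, this, hqsum]
      omega
    have hdropnil : q.drop k = [] := by
      rcases hd : q.drop k with _ | ⟨x, l⟩
      · rfl
      · exfalso
        have hxq : x ∈ q := List.mem_of_mem_drop (by rw [hd]; simp)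
        have := hqpos x hxq
        rw [hd] at hdrop
        simp [List.sum_cons] at hdrop
        omega
    have hlen : q.length ≤ k := by
      have := List.drop_eq_nil_iff.mp hdropnil
      omega
    -- sum ≤ length * m forces length = b + 1
    have h2n_le : 2 * n ≤ q.length * m := by
      calc 2 * n = q.sum := hqsum.symm
        _ ≤ q.length • m := List.sum_le_card_nsmul _ _ hle
        _ = q.length * m := by rw [smul_eq_mul]
    have hlen_gt : b < q.length := by
      by_contra h
      push_neg at h
      have : q.length * m ≤ b * m := Nat.mul_le_mul_right m h
      omega
    have hlen_eq : q.length = b + 1 := by omega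
    -- parity contradiction
    have hpar := sum_parity q
    have heven := even_countP_even q ho
    obtain ⟨e, he⟩ := heven
    rw [hqsum, hlen_eq, he] at hpar
    omega
  · -- k ≥ b + 2
    have hpk : (p.take k).sum = 2 * n := by
      rw [List.take_of_length_le (by omega), hpsum]
    rw [hpk, ← hqsum]
    exact htake_le
end
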